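/- Fix real constants C and D. Let θ, μ_θ : ℝ → ℝ be differentiable functions satisfying θ' = −μ_θ and μ_θ' = −C²·sin(D − θ)·cos(D − θ) on an interval. Then the function H(t) = −(1/2)·μ_θ(t)² + (C²/4)·cos(2D − 2θ(t)) is constant on that interval. -/
import Mathlib

/-- For constants `C, D` and differentiable `θ, μ_θ : ℝ → ℝ` with `θ' = −μ_θ` and
`μ_θ' = −C² sin(D − θ) cos(D − θ)` on an interval `s`, the Hamiltonian
`H(t) = −(1/2) μ_θ(t)² + (C²/4) cos(2D − 2θ(t))` is constant on `s`. -/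
theorem stmt_15 (C D : ℝ) (s : Set ℝ) (hs : s.OrdConnected)
    (θ μθ : ℝ → ℝ)
    (hθ : ∀ t ∈ s, HasDerivAt θ (-μθ t) t)
    (hμθ : ∀ t ∈ s, HasDerivAt μθ (-C^2 * Real.sin (D - θ t) * Real.cos (D - θ t)) t) :
    ∀ t₁ ∈ s, ∀ t₂ ∈ s,
      -(1/2) * μθ t₁ ^ 2 + (C^2/4) * Real.cos (2*D - 2*θ t₁) =
      -(1/2) * μθ t₂ ^ 2 + (C^2/4) * Real.cos (2*D - 2*θ t₂) := by
  set H : ℝ → ℝ := fun t => -(1/2) * μθ t ^ 2 + (C^2/4) * Real.cos (2*D - 2*θ t) with hHdef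
  have hH : ∀ t ∈ s, HasDerivAt H 0 t := by
    intro t ht
    have h1 := hμθ t ht
    have h2 := hθ t ht
    have hd : HasDerivAt H
        (-(1/2) * (↑2 * μθ t ^ 1 * (-C^2 * Real.sin (D - θ t) * Real.cos (D - θ t))) +
          (C^2/4) * (-Real.sin (2*D - 2*θ t) * (0 - 2 * (-μθ t)))) t := by
      exact ((h1.pow 2).const_mul _).add
        ((((hasDerivAt_const t (2*D)).sub (h2.const_mul 2)).cos).const_mul _)
    convert hd using 1
    have hsin : Real.sin (2*D - 2*θ t) = 2 * Real.sin (D - θ t) * Real.cos (D - θ t) := by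
      have := Real.sin_two_mul (D - θ t)
      rw [show 2*D - 2*θ t = 2 * (D - θ t) by ring, this]
    rw [hsin]; ring
  have key : ∀ a ∈ s, ∀ b ∈ s, a ≤ b → H b = H a := by
    intro a ha b hb hab
    have hsub : Set.Icc a b ⊆ s := hs.out ha hb
    have := constant_of_has_deriv_right_zero
      (f := H) (a := a) (b := b)
      (fun x hx => (hH x (hsub hx)).continuousAt.continuousWithinAt)
      (fun x hx => (hH x (hsub (Set.mem_Icc_of_Ico hx))).hasDerivWithinAt)
    exact this b (Set.mem_Icc.2 ⟨hab, le_refl b⟩)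
  intro t₁ ht₁ t₂ ht₂
  rcases le_total t₁ t₂ with h | h
  · exact (key t₁ ht₁ t₂ ht₂ h).symm
  · exact key t₂ ht₂ t₁ ht₁ h
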